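/- For 1 ≤ p ≤ ∞ and every f ∈ C^∞(𝕋), the limit lim_{n→∞} ‖d^n f/dt^n‖_p^{1/n} exists and equals sup{|k| : k ∈ ℤ, F f(k) ≠ 0}, in the extended nonnegative reals [0,∞]. -/

import Mathlib

open Filter MeasureTheory Complex
open scoped ENNReal Topology

noncomputable section

/-- The Haar probability measure of the 1-torus `𝕋 = ℝ/2πℤ`, realised on `ℝ` as
`(1/(2π)) · (Lebesgue restricted to (0, 2π])`. -/
def torusMeasure : Measure ℝ :=
  (ENNReal.ofReal (2 * Real.pi))⁻¹ • (volume.restrict (Set.Ioc 0 (2 * Real.pi)))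

/-- `f : ℝ → ℂ` represents an element of `C^∞(𝕋)`: it is infinitely differentiable and
`2π`-periodic. -/
def SmoothTorusFn (f : ℝ → ℂ) : Prop :=
  (∀ n : ℕ, ContDiff ℝ n f) ∧ Function.Periodic f (2 * Real.pi)

/-- The `k`-th Fourier coefficient `F f (k) = (1/2π) ∫₀^{2π} f(t) e^{-ikt} dt`. -/
def torusFourier (f : ℝ → ℂ) (k : ℤ) : ℂ :=
  ∫ t, f t * Complex.exp (-(Complex.I * k * t)) ∂torusMeasure

instance : IsProbabilityMeasure torusMeasure := by
  constructor
  rw [torusMeasure]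
  simp [Real.pi_pos.le, Real.two_pi_pos]
  rw [ENNReal.inv_mul_cancel (by positivity) (by exact ENNReal.mul_ne_top (by simp) ENNReal.ofReal_ne_top)]

lemma torusFourier_eq (g : ℝ → ℂ) (k : ℤ) :
    torusFourier g k
      = (2 * Real.pi)⁻¹ • ∫ t in (0:ℝ)..(2*Real.pi), g t * Complex.exp (-(I*k*t)) := by
  rw [torusFourier, torusMeasure, integral_smul_measure,
    intervalIntegral.integral_of_le Real.two_pi_pos.le]
  congr 1
  rw [ENNReal.toReal_inv, ENNReal.toReal_ofReal Real.two_pi_pos.le]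

lemma Periodic.deriv' {g : ℝ → ℂ} {c : ℝ} (h : Function.Periodic g c) :
    Function.Periodic (deriv g) c := by
  intro x
  have : (fun y : ℝ => g (y + c)) = g := funext fun y => h y
  calc deriv g (x + c) = deriv (fun y => g (y + c)) x := (deriv_comp_add_const g c x).symm
    _ = deriv g x := by rw [this]

lemma SmoothTorusFn.deriv {f : ℝ → ℂ} (hf : SmoothTorusFn f) : SmoothTorusFn (deriv f) := by
  refine ⟨fun n => ?_, Periodic.deriv' hf.2⟩
  have h := hf.1 (n + 1)
  rw [Nat.cast_add, Nat.cast_one, contDiff_succ_iff_deriv] at h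
  exact h.2.2

lemma SmoothTorusFn.iteratedDeriv {f : ℝ → ℂ} (hf : SmoothTorusFn f) (n : ℕ) :
    SmoothTorusFn (iteratedDeriv n f) := by
  induction n with
  | zero => simpa [iteratedDeriv_zero] using hf
  | succ n ih => rw [iteratedDeriv_succ]; exact ih.deriv

lemma SmoothTorusFn.continuous {f : ℝ → ℂ} (hf : SmoothTorusFn f) : Continuous f :=
  (hf.1 0).continuous

lemma SmoothTorusFn.differentiable {f : ℝ → ℂ} (hf : SmoothTorusFn f) : Differentiable ℝ f :=
  (hf.1 1).differentiable (by norm_num)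

lemma hasDerivAt_texp (k : ℤ) (t : ℝ) :
    HasDerivAt (fun s : ℝ => Complex.exp (-(I*k*s)))
      (-(I*k) * Complex.exp (-(I*k*t))) t := by
  have h : HasDerivAt (fun z : ℂ => Complex.exp (-(I*k*z)))
      (-(I*k) * Complex.exp (-(I*k*(t:ℂ)))) (t:ℂ) := by
    have h1 : HasDerivAt (fun z : ℂ => -(I*k*z)) (-(I*k)) (t:ℂ) := by
      simpa using ((hasDerivAt_id (t:ℂ)).const_mul (I*(k:ℂ))).fun_neg
    simpa [mul_comm] using h1.cexp
  exact h.comp_ofReal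

lemma texp_two_pi (k : ℤ) : Complex.exp (-(I*k*((2*Real.pi : ℝ):ℂ))) = 1 := by
  have : -(I*(k:ℂ)*((2*Real.pi : ℝ):ℂ)) = ((-k : ℤ):ℂ) * (2*(Real.pi:ℂ)*I) := by
    push_cast; ring
  rw [this, Complex.exp_int_mul_two_pi_mul_I]

lemma torusFourier_deriv {g : ℝ → ℂ} (hg : SmoothTorusFn g) (k : ℤ) :
    torusFourier (deriv g) k = I * k * torusFourier g k := by
  have hcont : Continuous g := hg.continuous
  have hcd : Continuous (deriv g) := hg.deriv.continuous
  have hE : Continuous fun t : ℝ => Complex.exp (-(I*k*t)) :=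
    by fun_prop
  have key : (∫ t in (0:ℝ)..(2*Real.pi), deriv g t * Complex.exp (-(I*k*t)))
      + ∫ t in (0:ℝ)..(2*Real.pi), g t * (-(I*k) * Complex.exp (-(I*k*t)))
      = 0 := by
    rw [← intervalIntegral.integral_add
      (f := fun t => deriv g t * Complex.exp (-(I*k*t)))
      (g := fun t => g t * (-(I*k) * Complex.exp (-(I*k*t))))
      (((hcd.mul hE).intervalIntegrable _ _ :
        IntervalIntegrable (fun t => deriv g t * Complex.exp (-(I*k*t))) volume 0 (2*Real.pi)))
      (((hcont.mul (continuous_const.mul hE)).intervalIntegrable _ _ :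
        IntervalIntegrable (fun t => g t * (-(I*k) * Complex.exp (-(I*k*t)))) volume 0
          (2*Real.pi)))]
    rw [intervalIntegral.integral_deriv_mul_eq_sub
      (fun x _ => (hg.differentiable x).hasDerivAt)
      (fun x _ => hasDerivAt_texp k x)
      (hcd.intervalIntegrable _ _)
      ((continuous_const.mul hE).intervalIntegrable _ _)]
    rw [texp_two_pi]
    have : g (2*Real.pi) = g 0 := by simpa using hg.2 0
    simp [this]
  have key2 : (∫ t in (0:ℝ)..(2*Real.pi), deriv g t * Complex.exp (-(I*k*t)))
      = I*k * ∫ t in (0:ℝ)..(2*Real.pi), g t * Complex.exp (-(I*k*t)) := by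
    have : ∀ t : ℝ, g t * (-(I*k) * Complex.exp (-(I*k*t)))
        = -(I*k) * (g t * Complex.exp (-(I*k*t))) := fun t => by ring
    simp_rw [this] at key
    rw [intervalIntegral.integral_const_mul] at key
    linear_combination key
  rw [torusFourier_eq, torusFourier_eq, key2]
  rw [Complex.real_smul, Complex.real_smul]
  ring

lemma torusFourier_iteratedDeriv {f : ℝ → ℂ} (hf : SmoothTorusFn f) (n : ℕ) (k : ℤ) :
    torusFourier (iteratedDeriv n f) k = (I*k)^n * torusFourier f k := by
  induction n with
  | zero => simp
  | succ n ih =>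
      rw [iteratedDeriv_succ, torusFourier_deriv (hf.iteratedDeriv n) k, ih, pow_succ]
      ring

lemma nnnorm_torusFourier_le {g : ℝ → ℂ} (hg : Continuous g) (k : ℤ) (p : ℝ≥0∞) (hp : 1 ≤ p) :
    (‖torusFourier g k‖₊ : ℝ≥0∞) ≤ eLpNorm g p torusMeasure := by
  have h1 : (‖torusFourier g k‖₊ : ℝ≥0∞) ≤ eLpNorm g 1 torusMeasure := by
    rw [torusFourier, eLpNorm_one_eq_lintegral_enorm]
    refine le_trans (enorm_integral_le_lintegral_enorm _) (le_of_eq ?_)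
    refine lintegral_congr fun t => ?_
    rw [enorm_mul]
    have : ‖Complex.exp (-(I*k*t))‖ₑ = 1 := by
      rw [← ofReal_norm, Complex.norm_exp]
      norm_num [Complex.add_re, Complex.mul_re]
    rw [this, mul_one]
  exact h1.trans (eLpNorm_le_eLpNorm_of_exponent_le hp hg.aestronglyMeasurable)

lemma tendsto_rpow_one_div {x : ℝ≥0∞} (h0 : x ≠ 0) (ht : x ≠ ⊤) :
    Tendsto (fun n : ℕ => x ^ (1/(n:ℝ))) atTop (𝓝 1) := by
  have hxR : 0 < x.toReal := ENNReal.toReal_pos h0 ht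
  have hre : Tendsto (fun n : ℕ => x.toReal ^ (1/(n:ℝ))) atTop (𝓝 1) := by
    have h1 : Tendsto (fun n : ℕ => Real.log x.toReal * (1/(n:ℝ))) atTop (𝓝 0) := by
      simpa using tendsto_const_nhds.mul (tendsto_one_div_atTop_nhds_zero_nat (𝕜 := ℝ))
    have := (Real.continuous_exp.tendsto 0).comp h1
    simp only [Real.exp_zero] at this
    refine this.congr fun n => ?_
    rw [Real.rpow_def_of_pos hxR]; rfl
  have : Tendsto (fun n : ℕ => ENNReal.ofReal (x.toReal ^ (1/(n:ℝ)))) atTop (𝓝 1) := by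
    simpa [Function.comp_def] using (ENNReal.continuous_ofReal.tendsto 1).comp hre
  refine this.congr fun n => ?_
  rw [← ENNReal.ofReal_rpow_of_pos hxR, ENNReal.ofReal_toReal ht]

section lift

local instance fact2pi : Fact (0 < 2 * Real.pi) := ⟨Real.two_pi_pos⟩

/-- The lift of a smooth periodic function to the additive circle. -/
def torusLift {g : ℝ → ℂ} (hg : SmoothTorusFn g) : C(AddCircle (2 * Real.pi), ℂ) :=
  ⟨hg.2.lift, hg.continuous.quotient_liftOn' (fun a b h => by
    rw [QuotientAddGroup.leftRel_apply] at h
    obtain ⟨m, hm⟩ := h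
    have hb : b = a + m • (2 * Real.pi) := by
      simp only [zsmul_eq_mul] at hm ⊢
      linarith [hm]
    rw [hb]
    exact ((hg.2.zsmul m) a).symm)⟩

lemma torusLift_coe {g : ℝ → ℂ} (hg : SmoothTorusFn g) (x : ℝ) :
    torusLift hg x = g x := by
  exact hg.2.lift_coe x

lemma fourierCoeff_torusLift {g : ℝ → ℂ} (hg : SmoothTorusFn g) (k : ℤ) :
    fourierCoeff (⇑(torusLift hg)) k = torusFourier g k := by
  rw [fourierCoeff_eq_intervalIntegral _ k 0, torusFourier_eq, zero_add]
  rw [one_div]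
  congr 1
  refine intervalIntegral.integral_congr fun t _ => ?_
  rw [torusLift_coe, fourier_coe_apply, smul_eq_mul, mul_comm]
  congr 2
  have hpi : ((Real.pi : ℝ):ℂ) ≠ 0 := by
    simp [Real.pi_ne_zero]
  field_simp
  push_cast; ring
end lift

section lift
local instance : Fact (0 < 2 * Real.pi) := ⟨Real.two_pi_pos⟩

lemma iteratedDeriv_bound {f : ℝ → ℂ} (hf : SmoothTorusFn f) (N : ℕ)
    (hN : ∀ k : ℤ, torusFourier f k ≠ 0 → k.natAbs ≤ N) (n : ℕ) (t : ℝ) :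
    ‖iteratedDeriv n f t‖
      ≤ (∑ k ∈ Finset.Icc (-(N:ℤ)) (N:ℤ), ‖torusFourier f k‖) * (N:ℝ)^n := by
  set F : Finset ℤ := Finset.Icc (-(N:ℤ)) (N:ℤ) with hF
  have hg := hf.iteratedDeriv n
  set G := torusLift hg with hG
  have hcoeff : ∀ k : ℤ, fourierCoeff (⇑G) k = (I*k)^n * torusFourier f k := fun k => by
    rw [hG, fourierCoeff_torusLift, torusFourier_iteratedDeriv hf]
  have hsupp : ∀ k : ℤ, k ∉ F → fourierCoeff (⇑G) k = 0 := by
    intro k hk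
    rw [hcoeff]
    have h0 : torusFourier f k = 0 := by
      by_contra hc
      have := hN k hc
      simp only [hF, Finset.mem_Icc] at hk
      omega
    rw [h0, mul_zero]
  have hsummable : Summable (fourierCoeff (⇑G)) := summable_of_ne_finset_zero hsupp
  have hx := has_pointwise_sum_fourier_series_of_summable hsummable (t : AddCircle (2*Real.pi))
  have heq : G (t : AddCircle (2*Real.pi))
      = ∑ k ∈ F, fourierCoeff (⇑G) k • fourier k (t : AddCircle (2*Real.pi)) :=
    hx.unique (hasSum_sum_of_ne_finset_zero (fun k hk => by rw [hsupp k hk, zero_smul]))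
  have hval : iteratedDeriv n f t = G (t : AddCircle (2*Real.pi)) := (torusLift_coe hg t).symm
  rw [hval, heq]
  refine (norm_sum_le _ _).trans ?_
  rw [Finset.sum_mul]
  refine Finset.sum_le_sum fun k hk => ?_
  have hfn : ‖fourier k (t : AddCircle (2*Real.pi))‖ = 1 := by
    rw [fourier_apply, Circle.norm_coe]
  rw [smul_eq_mul, norm_mul, hfn, mul_one, hcoeff, norm_mul, norm_pow]
  have hkN : ‖(I*(k:ℂ))‖ ≤ (N:ℝ) := by
    simp only [Finset.mem_Icc, hF] at hk
    rw [norm_mul, Complex.norm_I, one_mul, Complex.norm_intCast]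
    rw [abs_le]
    constructor <;> [exact_mod_cast hk.1; exact_mod_cast hk.2]
  calc ‖I*(k:ℂ)‖^n * ‖torusFourier f k‖
      ≤ (N:ℝ)^n * ‖torusFourier f k‖ := by
        gcongr
    _ = ‖torusFourier f k‖ * (N:ℝ)^n := mul_comm _ _
end lift

/-- For `1 ≤ p ≤ ∞` and every `f ∈ C^∞(𝕋)`, the limit `lim ‖d^n f/dt^n‖_p^{1/n}` exists and
equals `sup {|k| : k ∈ ℤ, F f (k) ≠ 0}` in `[0,∞]`. -/
theorem stmt10 (p : ℝ≥0∞) (hp : 1 ≤ p) (f : ℝ → ℂ) (hf : SmoothTorusFn f) :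
    Filter.Tendsto
      (fun n : ℕ => (eLpNorm (iteratedDeriv n f) p torusMeasure) ^ (1 / (n : ℝ))) atTop
      (𝓝 (⨆ k : ℤ, ⨆ _ : torusFourier f k ≠ 0, (‖k‖₊ : ℝ≥0∞))) := by
  set S := ⨆ k : ℤ, ⨆ _ : torusFourier f k ≠ 0, (‖k‖₊ : ℝ≥0∞) with hS
  set u := fun n : ℕ => (eLpNorm (iteratedDeriv n f) p torusMeasure) ^ (1 / (n : ℝ)) with hu
  -- Lower bound
  have hliminf : S ≤ atTop.liminf u := by
    refine iSup₂_le fun k hk => ?_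
    have hc0 : (‖torusFourier f k‖₊ : ℝ≥0∞) ≠ 0 := by simpa using hk
    have hct : (‖torusFourier f k‖₊ : ℝ≥0∞) ≠ ⊤ := ENNReal.coe_ne_top
    have htend : Tendsto
        (fun n : ℕ => (‖k‖₊ : ℝ≥0∞) * (‖torusFourier f k‖₊ : ℝ≥0∞) ^ (1/(n:ℝ))) atTop
        (𝓝 (‖k‖₊ : ℝ≥0∞)) := by
      have := ENNReal.Tendsto.const_mul (a := (‖k‖₊ : ℝ≥0∞)) (tendsto_rpow_one_div hc0 hct)
        (Or.inl (one_ne_zero : (1:ℝ≥0∞) ≠ 0))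
      simpa using this
    have hle : ∀ᶠ n : ℕ in atTop,
        (‖k‖₊ : ℝ≥0∞) * (‖torusFourier f k‖₊ : ℝ≥0∞) ^ (1/(n:ℝ)) ≤ u n := by
      filter_upwards [eventually_ge_atTop 1] with n hn
      have hn0 : (n:ℝ) ≠ 0 := Nat.cast_ne_zero.mpr (by omega)
      have h1 : (‖(I*(k:ℂ))^n * torusFourier f k‖₊ : ℝ≥0∞)
          ≤ eLpNorm (iteratedDeriv n f) p torusMeasure := by
        rw [← torusFourier_iteratedDeriv hf n k]
        exact nnnorm_torusFourier_le (hf.iteratedDeriv n).continuous k p hp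
      have h2 : (‖(I*(k:ℂ))^n * torusFourier f k‖₊ : ℝ≥0∞)
          = (‖k‖₊ : ℝ≥0∞)^(n:ℝ) * (‖torusFourier f k‖₊ : ℝ≥0∞) := by
        rw [nnnorm_mul, nnnorm_pow, nnnorm_mul, Complex.nnnorm_I, one_mul,
          Complex.nnnorm_intCast]
        push_cast
        rw [ENNReal.rpow_natCast]
      have h3 := ENNReal.rpow_le_rpow h1 (by positivity : (0:ℝ) ≤ 1/(n:ℝ))
      rw [h2, ENNReal.mul_rpow_of_nonneg _ _ (by positivity), ← ENNReal.rpow_mul,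
        mul_one_div_cancel hn0, ENNReal.rpow_one] at h3
      exact h3
    calc (‖k‖₊ : ℝ≥0∞) = atTop.liminf
          (fun n : ℕ => (‖k‖₊ : ℝ≥0∞) * (‖torusFourier f k‖₊ : ℝ≥0∞) ^ (1/(n:ℝ))) :=
        htend.liminf_eq.symm
      _ ≤ atTop.liminf u := liminf_le_liminf hle
  -- Upper bound
  have hlimsup : atTop.limsup u ≤ S := by
    by_cases hStop : S = ⊤
    · rw [hStop]; exact le_top
    set N := ⌊S.toReal⌋₊ with hNdef
    have hN : ∀ k : ℤ, torusFourier f k ≠ 0 → k.natAbs ≤ N := by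
      intro k hk
      have h1 : (‖k‖₊ : ℝ≥0∞) ≤ S := le_iSup₂ (f := fun k _ => ((‖k‖₊ : ℝ≥0∞))) k hk
      have h2 : (k.natAbs : ℝ) ≤ S.toReal := by
        have := ENNReal.toReal_mono hStop h1
        rw [ENNReal.coe_toReal, coe_nnnorm, Int.norm_eq_abs] at this
        rw [Nat.cast_natAbs]
        exact_mod_cast this
      exact Nat.le_floor h2
    set C := ∑ k ∈ Finset.Icc (-(N:ℤ)) (N:ℤ), ‖torusFourier f k‖ with hC
    have hCnn : 0 ≤ C := Finset.sum_nonneg fun _ _ => norm_nonneg _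
    have hNS : (N : ℝ≥0∞) ≤ S := by
      have h1 : (N:ℝ) ≤ S.toReal := Nat.floor_le ENNReal.toReal_nonneg
      calc (N : ℝ≥0∞) = ENNReal.ofReal (N:ℝ) := by simp
        _ ≤ ENNReal.ofReal S.toReal := ENNReal.ofReal_le_ofReal h1
        _ = S := ENNReal.ofReal_toReal hStop
    have hbound : ∀ n : ℕ, eLpNorm (iteratedDeriv n f) p torusMeasure
        ≤ ENNReal.ofReal (C * (N:ℝ)^n) := by
      intro n
      have h := eLpNorm_le_of_ae_bound (μ := torusMeasure) (p := p)
        (f := iteratedDeriv n f) (C := C * (N:ℝ)^n)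
        (ae_of_all _ (iteratedDeriv_bound hf N hN n))
      simpa [measure_univ] using h
    rcases eq_or_lt_of_le hCnn with hC0 | hCpos
    · -- C = 0
      refine limsup_le_of_le (by isBoundedDefault) ?_
      filter_upwards [eventually_ge_atTop 1] with n hn
      have : u n ≤ (ENNReal.ofReal (C * (N:ℝ)^n))^(1/(n:ℝ)) :=
        ENNReal.rpow_le_rpow (hbound n) (by positivity)
      rw [← hC0] at this
      simp only [zero_mul, ENNReal.ofReal_zero] at this
      rw [ENNReal.zero_rpow_of_pos (by positivity : (0:ℝ) < 1/(n:ℝ))] at this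
      exact le_trans this zero_le
    · -- C > 0
      have hvt : Tendsto (fun n : ℕ => (ENNReal.ofReal C)^(1/(n:ℝ)) * (N:ℝ≥0∞)) atTop
          (𝓝 (N:ℝ≥0∞)) := by
        have h1 := ENNReal.Tendsto.mul_const (b := (N:ℝ≥0∞))
          (tendsto_rpow_one_div (by simpa using hCpos) ENNReal.ofReal_ne_top)
          (Or.inl (one_ne_zero : (1:ℝ≥0∞) ≠ 0))
        simpa using h1
      have hle : ∀ᶠ n in atTop, u n ≤ (ENNReal.ofReal C)^(1/(n:ℝ)) * (N:ℝ≥0∞) := by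
        filter_upwards [eventually_ge_atTop 1] with n hn
        have hn0 : (n:ℝ) ≠ 0 := Nat.cast_ne_zero.mpr (by omega)
        have h1 : u n ≤ (ENNReal.ofReal (C * (N:ℝ)^n))^(1/(n:ℝ)) :=
          ENNReal.rpow_le_rpow (hbound n) (by positivity)
        have h2 : ENNReal.ofReal (C * (N:ℝ)^n) = ENNReal.ofReal C * (N:ℝ≥0∞)^(n:ℝ) := by
          rw [ENNReal.ofReal_mul hCnn, ENNReal.ofReal_pow (by positivity),
            ENNReal.ofReal_natCast, ← ENNReal.rpow_natCast]
        rw [h2, ENNReal.mul_rpow_of_nonneg _ _ (by positivity), ← ENNReal.rpow_mul,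
          mul_one_div_cancel hn0, ENNReal.rpow_one] at h1
        exact h1
      calc atTop.limsup u
          ≤ atTop.limsup (fun n : ℕ => (ENNReal.ofReal C)^(1/(n:ℝ)) * (N:ℝ≥0∞)) :=
            limsup_le_limsup hle
        _ = (N:ℝ≥0∞) := hvt.limsup_eq
        _ ≤ S := hNS
  exact tendsto_of_le_liminf_of_limsup_le hliminf hlimsup
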